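/- Let M be a symmetric positive semidefinite 2m×2m block matrix of the form [[G, G − D], [G − D, G]] where G is m×m symmetric PSD and D = diag(s) with s ≥ 0. Then M is positive semidefinite if and only if D ⪰ 0 and 2G − D ⪰ 0, i.e., 0 ⪯ diag(s) ⪯ 2G. -/

import Mathlib

open Matrix

lemma knockoff_quad {m : Type*} [Fintype m]
    (A B : Matrix m m ℝ) (x y : m → ℝ) :
    Sum.elim x y ⬝ᵥ (Matrix.fromBlocks A B B A *ᵥ Sum.elim x y)
      = (1/2) * ((x + y) ⬝ᵥ ((A + B) *ᵥ (x + y)) + (x - y) ⬝ᵥ ((A - B) *ᵥ (x - y))) := by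
  simp only [fromBlocks_mulVec, sumElim_dotProduct_sumElim, add_mulVec, sub_mulVec,
    mulVec_add, mulVec_sub, dotProduct_add, dotProduct_sub, add_dotProduct, sub_dotProduct,
    Sum.elim_comp_inl, Sum.elim_comp_inr]
  ring

/-- Feasibility of the knockoff Gram matrix: for `G` symmetric PSD and `D = diag(s)`
with `s ≥ 0`, the block matrix `[[G, G−D], [G−D, G]]` is positive semidefinite iff
`D ⪰ 0` and `2G − D ⪰ 0`, i.e. `0 ⪯ diag(s) ⪯ 2G`. -/
theorem knockoff_gram_psd_iff
    {m : Type*} [Fintype m] [DecidableEq m]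
    (G : Matrix m m ℝ) (hG : G.PosSemidef)
    (s : m → ℝ) (hs : ∀ j, 0 ≤ s j) :
    (Matrix.fromBlocks G (G - Matrix.diagonal s) (G - Matrix.diagonal s) G).PosSemidef
      ↔ (Matrix.diagonal s).PosSemidef ∧ (2 • G - Matrix.diagonal s).PosSemidef := by
  set D := Matrix.diagonal s with hD
  have hDpsd : D.PosSemidef := Matrix.posSemidef_diagonal_iff.mpr hs
  have hsum : G + (G - D) = 2 • G - D := by
    rw [two_smul]; abel
  have hdiff : G - (G - D) = D := by abel
  constructor
  · intro hM
    refine ⟨hDpsd, ?_⟩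
    refine posSemidef_iff_dotProduct_mulVec.mpr ⟨?_, ?_⟩
    · rw [← hsum]
      exact hG.1.add (hG.1.sub hDpsd.1)
    · intro x
      have h := hM.dotProduct_mulVec_nonneg (Sum.elim x x)
      rw [star_trivial, knockoff_quad] at h
      simp only [sub_self, zero_dotProduct, Matrix.mulVec_zero, dotProduct_zero, add_zero] at h
      have key : (x + x) ⬝ᵥ ((G + (G - D)) *ᵥ (x + x))
          = 4 * (x ⬝ᵥ ((2 • G - D) *ᵥ x)) := by
        rw [hsum]
        simp only [add_dotProduct, Matrix.mulVec_add, dotProduct_add]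
        ring
      rw [star_trivial]
      nlinarith [h, key]
  · rintro ⟨hD2, hS⟩
    refine posSemidef_iff_dotProduct_mulVec.mpr ⟨?_, ?_⟩
    · have hB : (G - D).IsHermitian := hG.1.sub hD2.1
      show _ = _
      rw [fromBlocks_conjTranspose, hG.1, hB]
    · intro v
      have hv : v = Sum.elim (v ∘ Sum.inl) (v ∘ Sum.inr) := (Sum.elim_comp_inl_inr v).symm
      rw [star_trivial, hv, knockoff_quad, hsum, hdiff]
      have h1 := hS.dotProduct_mulVec_nonneg (v ∘ Sum.inl + v ∘ Sum.inr)
      have h2 := hD2.dotProduct_mulVec_nonneg (v ∘ Sum.inl - v ∘ Sum.inr)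
      rw [star_trivial] at h1 h2
      linarith
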